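/- Let φ : [0, ∞) → ℝ be C¹ with ∫₀^∞ (φ'(r))² r² dr < ∞ and r·φ(r)² → 0 as r → ∞. Then ∫₀^∞ (φ(r)/(1+r))² r² dr ≤ 6·(∫₀^∞ (φ'(r))² r² dr + sup_{r≥0} r·φ(r)²). (Hardy-type inequality with weight (1+r)⁻², proven via the auxiliary function η(r) = r - 2ln(1+r) + r/(1+r).) -/

import Mathlib

open MeasureTheory Real Set Filter intervalIntegral

noncomputable def hardyEta (r : ℝ) : ℝ := r - 2 * Real.log (1 + r) + r / (1 + r)

lemma hardyEta_zero : hardyEta 0 = 0 := by simp [hardyEta]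

lemma hardyEta_hasDerivAt {r : ℝ} (hr : 0 ≤ r) :
    HasDerivAt hardyEta (r ^ 2 / (1 + r) ^ 2) r := by
  have h1 : (0:ℝ) < 1 + r := by linarith
  have hlog : HasDerivAt (fun x : ℝ => Real.log (1 + x)) (1 / (1 + r)) r := by
    have := (Real.hasDerivAt_log h1.ne').comp r ((hasDerivAt_id r).const_add 1)
    simpa [Function.comp_def] using this
  have hdiv : HasDerivAt (fun x : ℝ => x / (1 + x))
      ((1 * (1 + r) - r * 1) / (1 + r) ^ 2) r :=
    (hasDerivAt_id r).div ((hasDerivAt_id r).const_add 1) h1.ne'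
  have h : HasDerivAt hardyEta (1 - 2 * (1 / (1 + r)) + (1 * (1 + r) - r * 1) / (1 + r) ^ 2) r :=
    (((hasDerivAt_id r).sub (hlog.const_mul 2)).add hdiv)
  convert h using 1
  field_simp
  ring

lemma hardyEta_nonneg {r : ℝ} (hr : 0 ≤ r) : 0 ≤ hardyEta r := by
  have hmono : MonotoneOn hardyEta (Ici (0:ℝ)) := by
    apply monotoneOn_of_deriv_nonneg (convex_Ici 0)
    · exact fun x hx => ((hardyEta_hasDerivAt hx).continuousAt).continuousWithinAt
    · intro x hx
      rw [interior_Ici] at hx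
      exact ((hardyEta_hasDerivAt hx.le).differentiableAt).differentiableWithinAt
    · intro x hx
      rw [interior_Ici] at hx
      rw [(hardyEta_hasDerivAt hx.le).deriv]
      positivity
  calc (0:ℝ) = hardyEta 0 := hardyEta_zero.symm
  _ ≤ hardyEta r := hmono (by simp) hr hr

lemma hardy_log_ge {r : ℝ} (hr : 0 ≤ r) : r / (1 + r) ≤ Real.log (1 + r) := by
  have h1 : (0:ℝ) < 1 + r := by linarith
  have := Real.log_le_sub_one_of_pos (x := 1 / (1 + r)) (by positivity)
  rw [Real.log_div one_ne_zero h1.ne', Real.log_one] at this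
  have h2 : (1:ℝ) / (1 + r) - 1 = -(r / (1 + r)) := by field_simp; ring
  linarith [h2 ▸ this]

lemma hardyEta_le {r : ℝ} (hr : 0 ≤ r) : hardyEta r ≤ r ^ 2 / (1 + r) := by
  have h1 : (0:ℝ) < 1 + r := by linarith
  have hl := hardy_log_ge hr
  have h : r - 2 * (r / (1 + r)) + r / (1 + r) = r ^ 2 / (1 + r) := by field_simp; ring
  unfold hardyEta
  nlinarith [h]

lemma hardy_pointwise {a b e x : ℝ} (hx : 0 ≤ x) (he0 : 0 ≤ e)
    (he : e ≤ x ^ 2 / (1 + x)) :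
    -(2 * a * b * e) ≤ (1 / 2) * (a / (1 + x)) ^ 2 * x ^ 2 + 2 * b ^ 2 * x ^ 2 := by
  have h1 : (0:ℝ) < 1 + x := by linarith
  have hrhs : 0 ≤ (1 / 2) * (a / (1 + x)) ^ 2 * x ^ 2 + 2 * b ^ 2 * x ^ 2 := by positivity
  rcases le_or_gt 0 (a * b) with h | h
  · have : 0 ≤ 2 * a * b * e := by
      have := mul_nonneg (mul_nonneg (by norm_num : (0:ℝ) ≤ 2) h) he0
      linarith [this]
    linarith
  · have h2 : -(2 * a * b * e) ≤ -(2 * a * b * (x ^ 2 / (1 + x))) := by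
      have := mul_le_mul_of_nonpos_left he (by linarith : 2 * a * b ≤ 0)
      linarith
    have huv : a * b * (x ^ 2 / (1 + x)) = (a * x / (1 + x)) * (b * x) := by
      field_simp
    have hu2 : (a / (1 + x)) ^ 2 * x ^ 2 = (a * x / (1 + x)) ^ 2 := by
      field_simp
    have hs := sq_nonneg (a * x / (1 + x) + 2 * (b * x))
    nlinarith [hs, huv, hu2]

theorem hardy_type_inequality
    (φ : ℝ → ℝ)
    (hdiff : ∀ r ∈ Set.Ici (0 : ℝ), DifferentiableAt ℝ φ r)
    (hcont : ContinuousOn (deriv φ) (Set.Ici (0 : ℝ)))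
    (hint : IntegrableOn (fun r => (deriv φ r) ^ 2 * r ^ 2) (Set.Ici (0 : ℝ)))
    (hlim : Filter.Tendsto (fun r => r * (φ r) ^ 2) Filter.atTop (nhds 0)) :
    ∫ r in Set.Ici (0 : ℝ), (φ r / (1 + r)) ^ 2 * r ^ 2
      ≤ 6 * ((∫ r in Set.Ici (0 : ℝ), (deriv φ r) ^ 2 * r ^ 2)
          + ⨆ r : Set.Ici (0 : ℝ), (r : ℝ) * (φ r) ^ 2) := by
  set E := ∫ r in Set.Ici (0:ℝ), (deriv φ r) ^ 2 * r ^ 2 with hE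
  set S := ⨆ r : Set.Ici (0:ℝ), (r : ℝ) * (φ r) ^ 2 with hS
  have hφc : ContinuousOn φ (Ici 0) :=
    fun r hr => (hdiff r hr).continuousAt.continuousWithinAt
  -- boundedness of the range of r ↦ r φ(r)²
  obtain ⟨M, hM⟩ : ∃ M : ℝ, ∀ r ≥ M, r * φ r ^ 2 ≤ 1 := by
    have := (Metric.tendsto_atTop.mp hlim) 1 one_pos
    obtain ⟨N, hN⟩ := this
    refine ⟨N, fun r hr => ?_⟩
    have := hN r hr
    rw [Real.dist_eq, sub_zero] at this
    exact (abs_lt.mp this).2.le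
  set M' := max M 0 with hM'
  have hgc : ContinuousOn (fun r : ℝ => r * φ r ^ 2) (Icc 0 M') :=
    continuousOn_id.mul ((hφc.mono Icc_subset_Ici_self).pow 2)
  obtain ⟨C, hC⟩ := ((isCompact_Icc.image_of_continuousOn hgc).bddAbove)
  have hBdd : BddAbove (Set.range fun r : Set.Ici (0:ℝ) => (r : ℝ) * (φ r) ^ 2) := by
    refine ⟨max C 1, ?_⟩
    rintro _ ⟨⟨r, hr⟩, rfl⟩
    rcases le_or_gt r M' with h | h
    · exact le_max_of_le_left (hC ⟨r, ⟨hr, h⟩, rfl⟩)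
    · exact le_max_of_le_right (hM r (le_trans (le_max_left M 0) h.le))
    
  have hSr : ∀ r : ℝ, 0 ≤ r → r * φ r ^ 2 ≤ S :=
    fun r hr => le_ciSup hBdd (⟨r, hr⟩ : Set.Ici (0:ℝ))
  have hS0 : 0 ≤ S := by
    have := hSr 0 le_rfl
    simpa using this
  have hE0 : 0 ≤ E :=
    setIntegral_nonneg measurableSet_Ici (fun x _ => by positivity)
  -- the uniform bound on finite intervals
  have key : ∀ R : ℝ, 0 ≤ R →
      ∫ r in (0:ℝ)..R, (φ r / (1 + r)) ^ 2 * r ^ 2 ≤ 2 * S + 4 * E := by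
    intro R hR
    have huIcc : uIcc (0:ℝ) R = Icc 0 R := uIcc_of_le hR
    have hsub : Icc (0:ℝ) R ⊆ Ici 0 := Icc_subset_Ici_self
    have hφ'c : ContinuousOn (deriv φ) (Icc 0 R) := hcont.mono hsub
    have hφI : ContinuousOn φ (Icc 0 R) := hφc.mono hsub
    have hηc : ContinuousOn hardyEta (Icc 0 R) :=
      fun x hx => (hardyEta_hasDerivAt hx.1).continuousAt.continuousWithinAt
    have hη'c : ContinuousOn (fun x : ℝ => x ^ 2 / (1 + x) ^ 2) (Icc 0 R) := by
      apply ContinuousOn.div (continuous_pow 2).continuousOn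
        (((continuous_const.add continuous_id).pow 2).continuousOn)
      intro x hx
      have : (0:ℝ) < 1 + x := by linarith [hx.1]
      exact pow_ne_zero 2 this.ne'
    -- FTC on [0, R]
    have hF : ∀ x ∈ uIcc (0:ℝ) R, HasDerivAt (fun r => φ r ^ 2 * hardyEta r)
        (2 * φ x * deriv φ x * hardyEta x + φ x ^ 2 * (x ^ 2 / (1 + x) ^ 2)) x := by
      intro x hx
      rw [huIcc] at hx
      have hφx : HasDerivAt φ (deriv φ x) x := (hdiff x hx.1).hasDerivAt
      have : HasDerivAt (fun r => φ r ^ 2 * hardyEta r)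
          (((2:ℕ):ℝ) * φ x ^ (2 - 1) * deriv φ x * hardyEta x + φ x ^ 2 * (x ^ 2 / (1 + x) ^ 2)) x :=
        (hφx.pow 2).mul (hardyEta_hasDerivAt hx.1)
      convert this using 1
      norm_num
    have hA : IntervalIntegrable (fun x => 2 * φ x * deriv φ x * hardyEta x) volume 0 R := by
      apply ContinuousOn.intervalIntegrable
      rw [huIcc]
      exact ((continuousOn_const.mul hφI).mul hφ'c).mul hηc
    have hB : IntervalIntegrable (fun x => φ x ^ 2 * (x ^ 2 / (1 + x) ^ 2)) volume 0 R := by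
      apply ContinuousOn.intervalIntegrable
      rw [huIcc]
      exact (hφI.pow 2).mul hη'c
    have hFTC : (∫ x in (0:ℝ)..R,
        (2 * φ x * deriv φ x * hardyEta x + φ x ^ 2 * (x ^ 2 / (1 + x) ^ 2)))
        = φ R ^ 2 * hardyEta R - φ 0 ^ 2 * hardyEta 0 :=
      intervalIntegral.integral_eq_sub_of_hasDerivAt hF (hA.add hB)
    rw [intervalIntegral.integral_add hA hB, hardyEta_zero] at hFTC
    -- identify the target integrand
    have hIeq : ∫ r in (0:ℝ)..R, (φ r / (1 + r)) ^ 2 * r ^ 2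
        = ∫ x in (0:ℝ)..R, φ x ^ 2 * (x ^ 2 / (1 + x) ^ 2) := by
      apply intervalIntegral.integral_congr
      intro x hx
      rw [huIcc] at hx
      have h1x : (0:ℝ) < 1 + x := by linarith [hx.1]
      field_simp
    set I : ℝ := ∫ x in (0:ℝ)..R, φ x ^ 2 * (x ^ 2 / (1 + x) ^ 2) with hI
    set J : ℝ := ∫ x in (0:ℝ)..R, 2 * φ x * deriv φ x * hardyEta x with hJ
    -- boundary term
    have hbdry : φ R ^ 2 * hardyEta R ≤ S := by
      have h1 : (0:ℝ) < 1 + R := by linarith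
      have h2 : hardyEta R ≤ R := by
        have := hardyEta_le hR
        have h3 : R ^ 2 / (1 + R) ≤ R := by
          rw [div_le_iff₀ h1]; nlinarith
        linarith
      calc φ R ^ 2 * hardyEta R ≤ φ R ^ 2 * R := by nlinarith [sq_nonneg (φ R)]
      _ = R * φ R ^ 2 := by ring
      _ ≤ S := hSr R hR
    -- bound -J
    have hbound : IntervalIntegrable
        (fun x => (1/2) * (φ x / (1 + x)) ^ 2 * x ^ 2 + 2 * (deriv φ x) ^ 2 * x ^ 2)
        volume 0 R := by
      apply ContinuousOn.intervalIntegrable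
      rw [huIcc]
      apply ContinuousOn.add
      · have : ContinuousOn (fun x : ℝ => φ x / (1 + x)) (Icc 0 R) := by
          apply hφI.div ((continuous_const.add continuous_id).continuousOn)
          intro x hx
          have : (0:ℝ) < 1 + x := by linarith [hx.1]
          exact this.ne'
        exact (continuousOn_const.mul (this.pow 2)).mul (continuous_pow 2).continuousOn
      · exact (continuousOn_const.mul (hφ'c.pow 2)).mul (continuous_pow 2).continuousOn
    have hJbound : -J ≤ ∫ x in (0:ℝ)..R,
        ((1/2) * (φ x / (1 + x)) ^ 2 * x ^ 2 + 2 * (deriv φ x) ^ 2 * x ^ 2) := by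
      have hnegJ : -J = ∫ x in (0:ℝ)..R, -(2 * φ x * deriv φ x * hardyEta x) := by
        rw [hJ, ← intervalIntegral.integral_neg]
      rw [hnegJ]
      apply intervalIntegral.integral_mono_on hR hA.neg hbound
      intro x hx
      exact hardy_pointwise hx.1 (hardyEta_nonneg hx.1) (hardyEta_le hx.1)
    -- the bound integral equals (1/2) I + 2 E_R
    have hsplit : ∫ x in (0:ℝ)..R,
        ((1/2) * (φ x / (1 + x)) ^ 2 * x ^ 2 + 2 * (deriv φ x) ^ 2 * x ^ 2)
        = (1/2) * (∫ x in (0:ℝ)..R, (φ x / (1 + x)) ^ 2 * x ^ 2)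
          + 2 * ∫ x in (0:ℝ)..R, (deriv φ x) ^ 2 * x ^ 2 := by
      have h1 : IntervalIntegrable (fun x => (1/2) * ((φ x / (1 + x)) ^ 2 * x ^ 2)) volume 0 R := by
        apply IntervalIntegrable.const_mul
        apply ContinuousOn.intervalIntegrable
        rw [huIcc]
        have hdiv : ContinuousOn (fun x : ℝ => φ x / (1 + x)) (Icc 0 R) := by
          apply hφI.div ((continuous_const.add continuous_id).continuousOn)
          intro x hx
          have : (0:ℝ) < 1 + x := by linarith [hx.1]
          exact this.ne'
        exact (hdiv.pow 2).mul (continuous_pow 2).continuousOn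
      have h2 : IntervalIntegrable (fun x => 2 * ((deriv φ x) ^ 2 * x ^ 2)) volume 0 R := by
        apply IntervalIntegrable.const_mul
        apply ContinuousOn.intervalIntegrable
        rw [huIcc]
        exact (hφ'c.pow 2).mul (continuous_pow 2).continuousOn
      calc ∫ x in (0:ℝ)..R,
          ((1/2) * (φ x / (1 + x)) ^ 2 * x ^ 2 + 2 * (deriv φ x) ^ 2 * x ^ 2)
          = ∫ x in (0:ℝ)..R,
          ((1/2) * ((φ x / (1 + x)) ^ 2 * x ^ 2) + 2 * ((deriv φ x) ^ 2 * x ^ 2)) := by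
            apply intervalIntegral.integral_congr; intro x _; ring
      _ = (∫ x in (0:ℝ)..R, (1/2) * ((φ x / (1 + x)) ^ 2 * x ^ 2))
          + ∫ x in (0:ℝ)..R, 2 * ((deriv φ x) ^ 2 * x ^ 2) :=
            intervalIntegral.integral_add h1 h2
      _ = (1/2) * (∫ x in (0:ℝ)..R, (φ x / (1 + x)) ^ 2 * x ^ 2)
          + 2 * ∫ x in (0:ℝ)..R, (deriv φ x) ^ 2 * x ^ 2 := by
            rw [intervalIntegral.integral_const_mul, intervalIntegral.integral_const_mul]
    -- E_R ≤ E
    have hER : ∫ x in (0:ℝ)..R, (deriv φ x) ^ 2 * x ^ 2 ≤ E := by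
      rw [intervalIntegral.integral_of_le hR]
      apply setIntegral_mono_set hint
      · exact ae_of_all _ fun x => by positivity
      · exact HasSubset.Subset.eventuallyLE (Ioc_subset_Icc_self.trans Icc_subset_Ici_self)
    -- combine
    rw [hIeq]
    have hFI : I = φ R ^ 2 * hardyEta R - J := by
      rw [hI, hJ]; linarith [hFTC]
    rw [hIeq] at hsplit
    linarith
  -- pass to the limit
  set f : ℝ → ℝ := fun r => (φ r / (1 + r)) ^ 2 * r ^ 2 with hf
  have hfnonneg : ∀ x : ℝ, 0 ≤ f x := fun x => by positivity
  have hfiOc : ∀ R : ℝ, IntegrableOn f (Ioc 0 R) := by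
    intro R
    rcases le_or_gt 0 R with h | h
    · have : IntervalIntegrable f volume 0 R := by
        apply ContinuousOn.intervalIntegrable
        rw [uIcc_of_le h]
        have hdiv : ContinuousOn (fun x : ℝ => φ x / (1 + x)) (Icc 0 R) := by
          apply (hφc.mono Icc_subset_Ici_self).div
            ((continuous_const.add continuous_id).continuousOn)
          intro x hx
          have : (0:ℝ) < 1 + x := by linarith [hx.1]
          exact this.ne'
        exact (hdiv.pow 2).mul (continuous_pow 2).continuousOn
      exact this.1
    · rw [Set.Ioc_eq_empty (by linarith)]
      exact integrableOn_empty
  have hbound : ∀ᶠ R : ℝ in atTop, (∫ x in (0:ℝ)..R, ‖f x‖) ≤ 2 * S + 4 * E := by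
    filter_upwards [eventually_ge_atTop (0:ℝ)] with R hR
    have : (∫ x in (0:ℝ)..R, ‖f x‖) = ∫ x in (0:ℝ)..R, f x := by
      apply intervalIntegral.integral_congr
      intro x _
      exact Real.norm_of_nonneg (hfnonneg x)
    rw [this]
    exact key R hR
  have hInt : IntegrableOn f (Ioi 0) :=
    integrableOn_Ioi_of_intervalIntegral_norm_bounded (2 * S + 4 * E) 0 hfiOc tendsto_id hbound
  have htends := intervalIntegral_tendsto_integral_Ioi 0 hInt tendsto_id
  have hle : (∫ r in Ioi (0:ℝ), f r) ≤ 2 * S + 4 * E := by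
    apply le_of_tendsto htends
    filter_upwards [eventually_ge_atTop (0:ℝ)] with R hR
    exact key R hR
  have hIci : (∫ r in Ici (0:ℝ), f r) = ∫ r in Ioi (0:ℝ), f r :=
    integral_Ici_eq_integral_Ioi
  calc (∫ r in Ici (0:ℝ), f r) = ∫ r in Ioi (0:ℝ), f r := hIci
  _ ≤ 2 * S + 4 * E := hle
  _ ≤ 6 * (E + S) := by linarith
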